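/- For every real p ≥ 2 there exists a constant C > 0 such that for every natural number N, every t > 0 and every sequence a₁, …, a_N of real numbers, ( ∫₀¹ | Σ_{k=1}^N a_k · e^{−t k²π²} · √2 sin(kπx) |^p dx )^{1/p} ≤ C · t^{−(p−2)/(4p)} · ( Σ_{k=1}^N a_k² )^{1/2}. -/

import Mathlib

open Real MeasureTheory intervalIntegral Finset


lemma integral_cos_mul'' {d : ℝ} (hd : d ≠ 0) :
    ∫ x in (0:ℝ)..1, Real.cos (d * x) = Real.sin d / d := by
  have h : ∀ x ∈ Set.uIcc (0:ℝ) 1,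
      HasDerivAt (fun y => Real.sin (d * y) / d) (Real.cos (d * x)) x := by
    intro x _
    have h1 : HasDerivAt (fun y : ℝ => d * y) d x := by
      simpa using (hasDerivAt_id x).const_mul d
    have h2 := (Real.hasDerivAt_sin (d * x)).comp x h1
    have h3 := h2.div_const d
    simpa [mul_comm, mul_div_assoc, mul_div_cancel_left₀, hd] using h3
  rw [intervalIntegral.integral_eq_sub_of_hasDerivAt h
    ((Real.continuous_cos.comp (continuous_const.mul continuous_id)).intervalIntegrable 0 1)]
  simp

lemma sin_mul_sin' (a b : ℝ) :
    Real.sin a * Real.sin b = (Real.cos (a - b) - Real.cos (a + b)) / 2 := by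
  have := Real.cos_sub_cos (a - b) (a + b)
  have h1 : (a - b + (a + b)) / 2 = a := by ring
  have h2 : (a - b - (a + b)) / 2 = -b := by ring
  rw [h1, h2, Real.sin_neg] at this
  linarith

lemma orth (m n : ℕ) :
    ∫ x in (0:ℝ)..1,
      Real.sin (((m:ℝ)+1) * Real.pi * x) * Real.sin (((n:ℝ)+1) * Real.pi * x)
      = if m = n then 1/2 else 0 := by
  set am : ℝ := ((m:ℝ)+1) * Real.pi with ham
  set an : ℝ := ((n:ℝ)+1) * Real.pi with han
  have hrw : ∀ x : ℝ, Real.sin (am * x) * Real.sin (an * x)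
      = Real.cos ((am - an) * x) / 2 - Real.cos ((am + an) * x) / 2 := by
    intro x
    rw [sin_mul_sin' (am * x) (an * x)]
    ring_nf
  have hint1 : ∀ d : ℝ, IntervalIntegrable (fun x => Real.cos (d * x) / 2) volume 0 1 :=
    fun d => ((Real.continuous_cos.comp (continuous_const.mul continuous_id)).div_const 2
      ).intervalIntegrable 0 1
  calc ∫ x in (0:ℝ)..1, Real.sin (am * x) * Real.sin (an * x)
      = ∫ x in (0:ℝ)..1, (Real.cos ((am - an) * x) / 2 - Real.cos ((am + an) * x) / 2) := by
        simp_rw [hrw]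
    _ = (∫ x in (0:ℝ)..1, Real.cos ((am - an) * x)) / 2
        - (∫ x in (0:ℝ)..1, Real.cos ((am + an) * x)) / 2 := by
        rw [intervalIntegral.integral_sub (hint1 _) (hint1 _),
          intervalIntegral.integral_div, intervalIntegral.integral_div]
    _ = if m = n then 1/2 else 0 := by
        have hplus : (∫ x in (0:ℝ)..1, Real.cos ((am + an) * x)) = 0 := by
          have hd : am + an ≠ 0 := by
            have : (0:ℝ) < am + an := by positivity
            linarith
          rw [integral_cos_mul'' hd]
          have : am + an = ((m + n + 2 : ℕ) : ℝ) * Real.pi := by push_cast [ham, han]; ring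
          rw [this, Real.sin_nat_mul_pi, zero_div]
        by_cases h : m = n
        · subst h
          have : am - an = 0 := by rw [ham, han]; ring
          rw [this, hplus]
          simp
        · have hd : am - an ≠ 0 := by
            rw [ham, han]
            have hmn : ((m:ℝ)+1) ≠ ((n:ℝ)+1) := by
              intro hc
              exact h (by exact_mod_cast add_left_injective 1 hc)
            intro hc
            apply hmn
            have hpi := Real.pi_ne_zero
            have : (((m:ℝ)+1) - ((n:ℝ)+1)) * Real.pi = 0 := by linarith [hc]; 
            rcases mul_eq_zero.mp this with hc2 | hc2
            · linarith
            · exact absurd hc2 hpi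
          rw [integral_cos_mul'' hd, hplus]
          have : am - an = ((m:ℤ) - (n:ℤ) : ℤ) * Real.pi := by push_cast [ham, han]; ring
          rw [this, Real.sin_int_mul_pi, zero_div]
          simp [h]



lemma l2sum (N : ℕ) (c : ℕ → ℝ) :
    ∫ x in (0:ℝ)..1,
      (∑ k ∈ Finset.range N, c k * (Real.sqrt 2 * Real.sin (((k:ℝ)+1) * Real.pi * x)))^2
      = ∑ k ∈ Finset.range N, (c k)^2 := by
  have hcont : ∀ k : ℕ, Continuous (fun x : ℝ => Real.sin (((k:ℝ)+1) * Real.pi * x)) :=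
    fun k => Real.continuous_sin.comp (continuous_const.mul continuous_id)
  have hsq : ∀ x : ℝ,
      (∑ k ∈ Finset.range N, c k * (Real.sqrt 2 * Real.sin (((k:ℝ)+1) * Real.pi * x)))^2
      = ∑ j ∈ Finset.range N, ∑ k ∈ Finset.range N,
          (2 * c j * c k) * (Real.sin (((j:ℝ)+1) * Real.pi * x) * Real.sin (((k:ℝ)+1) * Real.pi * x)) := by
    intro x
    rw [sq, Finset.sum_mul_sum]
    refine Finset.sum_congr rfl fun j _ => Finset.sum_congr rfl fun k _ => ?_
    have h2 : Real.sqrt 2 * Real.sqrt 2 = 2 := Real.mul_self_sqrt (by norm_num)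
    calc c j * (Real.sqrt 2 * Real.sin (((j:ℝ)+1) * Real.pi * x)) *
          (c k * (Real.sqrt 2 * Real.sin (((k:ℝ)+1) * Real.pi * x)))
        = (Real.sqrt 2 * Real.sqrt 2) * c j * c k *
            (Real.sin (((j:ℝ)+1) * Real.pi * x) * Real.sin (((k:ℝ)+1) * Real.pi * x)) := by ring
      _ = _ := by rw [h2]
  simp_rw [hsq]
  rw [intervalIntegral.integral_finset_sum]
  · have : ∀ j ∈ Finset.range N,
        (∫ x in (0:ℝ)..1, ∑ k ∈ Finset.range N,
          (2 * c j * c k) * (Real.sin (((j:ℝ)+1) * Real.pi * x) * Real.sin (((k:ℝ)+1) * Real.pi * x)))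
        = if j ∈ Finset.range N then (c j)^2 else 0 := by
      intro j hj
      rw [if_pos hj, intervalIntegral.integral_finset_sum]
      · have : ∀ k ∈ Finset.range N,
            (∫ x in (0:ℝ)..1, (2 * c j * c k) *
              (Real.sin (((j:ℝ)+1) * Real.pi * x) * Real.sin (((k:ℝ)+1) * Real.pi * x)))
            = if k = j then (c j)^2 else 0 := by
          intro k hk
          rw [intervalIntegral.integral_const_mul, orth j k]
          by_cases h : j = k
          · subst h; simp; ring
          · simp [h, Ne.symm h]
        rw [Finset.sum_congr rfl this, Finset.sum_ite_eq' (Finset.range N) j (fun _ => (c j)^2),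
          if_pos hj]
      · intro k _
        exact (continuous_const.mul ((hcont j).mul (hcont k))).intervalIntegrable 0 1
    rw [Finset.sum_congr rfl this]
    exact Finset.sum_congr rfl fun j hj => by simp [Finset.mem_range.mp hj]
  · intro j _
    apply Continuous.intervalIntegrable
    exact continuous_finset_sum _ fun k _ => continuous_const.mul ((hcont j).mul (hcont k))


lemma tail_inv_sq (K N : ℕ) (hK : 1 ≤ K) :
    ∑ k ∈ Finset.Ico K N, (((k:ℝ)+1)^2)⁻¹ ≤ (K:ℝ)⁻¹ := by
  rcases le_or_gt N K with h | h
  · rw [Finset.Ico_eq_empty (by omega)]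
    simp
  · have hre : ∑ k ∈ Finset.Ico K N, (((k:ℝ)+1)^2)⁻¹
        = ∑ i ∈ Finset.Ioc K N, ((i:ℝ)^2)⁻¹ := by
      refine Finset.sum_nbij' (fun k => k + 1) (fun i => i - 1) ?_ ?_ ?_ ?_ ?_
      · intro k hk; simp only [Finset.mem_Ico] at hk; simp only [Finset.mem_Ioc]; omega
      · intro i hi; simp only [Finset.mem_Ioc] at hi; simp only [Finset.mem_Ico]; omega
      · intro k hk; omega
      · intro i hi; simp only [Finset.mem_Ioc] at hi; omega
      · intro k hk; push_cast; ring

    rw [hre]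
    calc ∑ i ∈ Finset.Ioc K N, ((i:ℝ)^2)⁻¹ ≤ (K:ℝ)⁻¹ - (N:ℝ)⁻¹ :=
          sum_Ioc_inv_sq_le_sub (by omega) h.le
      _ ≤ (K:ℝ)⁻¹ := by
          have : (0:ℝ) ≤ (N:ℝ)⁻¹ := by positivity
          linarith

lemma gauss_sum (N : ℕ) {c : ℝ} (hc : 0 < c) :
    ∑ k ∈ Finset.range N, Real.exp (-(c * ((k:ℝ)+1)^2)) ≤ 4 / Real.sqrt c := by
  have hsc : 0 < Real.sqrt c := Real.sqrt_pos.mpr hc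
  rcases le_or_gt 1 c with h1 | h1
  · -- c ≥ 1 : geometric bound
    have hterm : ∀ k : ℕ, Real.exp (-(c * ((k:ℝ)+1)^2)) ≤ Real.exp (-c) ^ (k+1) := by
      intro k
      rw [← Real.exp_nat_mul]
      apply Real.exp_le_exp.mpr
      have hk0 : (0:ℝ) ≤ (k:ℝ) := Nat.cast_nonneg k
      push_cast
      nlinarith [mul_le_mul_of_nonneg_left (by nlinarith : (k:ℝ)+1 ≤ ((k:ℝ)+1)^2) hc.le]
    have hr0 : 0 < Real.exp (-c) := Real.exp_pos _
    have hr1 : Real.exp (-c) < 1 := Real.exp_lt_one_iff.mpr (by linarith)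
    calc ∑ k ∈ Finset.range N, Real.exp (-(c * ((k:ℝ)+1)^2))
        ≤ ∑ k ∈ Finset.range N, Real.exp (-c) ^ (k+1) :=
          Finset.sum_le_sum fun k _ => hterm k
      _ = Real.exp (-c) * ∑ k ∈ Finset.range N, Real.exp (-c) ^ k := by
          rw [Finset.mul_sum]; exact Finset.sum_congr rfl fun k _ => by ring
      _ ≤ Real.exp (-c) * (1 - Real.exp (-c))⁻¹ := by
          apply mul_le_mul_of_nonneg_left _ hr0.le
          calc ∑ k ∈ Finset.range N, Real.exp (-c) ^ k
              ≤ ∑' k : ℕ, Real.exp (-c) ^ k :=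
                Summable.sum_le_tsum _ (fun i _ => pow_nonneg hr0.le i)
                  (summable_geometric_of_lt_one hr0.le hr1)
            _ = (1 - Real.exp (-c))⁻¹ := tsum_geometric_of_lt_one hr0.le hr1
      _ ≤ 1 / c := by
          have key : Real.exp (-c) * (1 - Real.exp (-c))⁻¹ = (Real.exp c - 1)⁻¹ := by
            rw [Real.exp_neg]
            have hE : (0:ℝ) < Real.exp c := Real.exp_pos c
            have hE1 : (1:ℝ) < Real.exp c := by
              have := Real.add_one_le_exp c; linarith
            field_simp
          rw [key, one_div]
          exact inv_anti₀ hc (by linarith [Real.add_one_le_exp c])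
      _ ≤ 4 / Real.sqrt c := by
          rw [div_le_div_iff₀ hc hsc]
          have h2 : Real.sqrt c ≤ c := by
            calc Real.sqrt c ≤ Real.sqrt (c^2) := Real.sqrt_le_sqrt (by nlinarith)
              _ = c := Real.sqrt_sq hc.le
          nlinarith
  · -- c < 1 : split sum
    set K : ℕ := ⌈(Real.sqrt c)⁻¹⌉₊ with hKdef
    have hKle : (Real.sqrt c)⁻¹ ≤ (K:ℝ) := Nat.le_ceil _
    have hKlt : (K:ℝ) < (Real.sqrt c)⁻¹ + 1 := Nat.ceil_lt_add_one (by positivity)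
    have hscle1 : Real.sqrt c ≤ 1 := by
      rw [show (1:ℝ) = Real.sqrt 1 by simp]
      exact Real.sqrt_le_sqrt h1.le
    have hinv1 : (1:ℝ) ≤ (Real.sqrt c)⁻¹ := by
      simpa using inv_anti₀ hsc hscle1
    have hK1 : 1 ≤ K := Nat.one_le_ceil_iff.mpr (by positivity)
    have hsplit := Finset.sum_filter_add_sum_filter_not (Finset.range N)
      (fun k => k < K) (fun k => Real.exp (-(c * ((k:ℝ)+1)^2)))
    rw [← hsplit]
    have hpart1 : ∑ k ∈ (Finset.range N).filter (fun k => k < K),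
        Real.exp (-(c * ((k:ℝ)+1)^2)) ≤ (K:ℝ) := by
      calc _ ≤ ∑ k ∈ (Finset.range N).filter (fun k => k < K), (1:ℝ) := by
            apply Finset.sum_le_sum
            intro k _
            apply Real.exp_le_one_iff.mpr
            nlinarith [sq_nonneg ((k:ℝ)+1), hc]
        _ = ((Finset.range N).filter (fun k => k < K)).card := by simp
        _ ≤ (K:ℝ) := by
            have hsub : (Finset.range N).filter (fun k => k < K) ⊆ Finset.range K := by
              intro k hk
              simp only [Finset.mem_filter, Finset.mem_range] at hk ⊢
              exact hk.2
            exact_mod_cast Finset.card_le_card hsub |>.trans (by simp)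
    have hpart2 : ∑ k ∈ (Finset.range N).filter (fun k => ¬ k < K),
        Real.exp (-(c * ((k:ℝ)+1)^2)) ≤ (Real.sqrt c)⁻¹ := by
      have hfe : (Finset.range N).filter (fun k => ¬ k < K) = Finset.Ico K N := by
        ext k
        simp only [Finset.mem_filter, Finset.mem_range, Finset.mem_Ico]
        omega
      rw [hfe]
      calc ∑ k ∈ Finset.Ico K N, Real.exp (-(c * ((k:ℝ)+1)^2))
          ≤ ∑ k ∈ Finset.Ico K N, c⁻¹ * (((k:ℝ)+1)^2)⁻¹ := by
            apply Finset.sum_le_sum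
            intro k _
            have hy : 0 < c * ((k:ℝ)+1)^2 := by positivity
            have := Real.add_one_le_exp (c * ((k:ℝ)+1)^2)
            rw [Real.exp_neg, ← mul_inv]
            apply inv_anti₀ hy
            linarith
        _ = c⁻¹ * ∑ k ∈ Finset.Ico K N, (((k:ℝ)+1)^2)⁻¹ := by rw [Finset.mul_sum]
        _ ≤ c⁻¹ * (K:ℝ)⁻¹ := by
            apply mul_le_mul_of_nonneg_left (tail_inv_sq K N hK1) (by positivity)
        _ ≤ c⁻¹ * Real.sqrt c := by
            apply mul_le_mul_of_nonneg_left _ (by positivity)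
            have h := inv_anti₀ (by positivity : (0:ℝ) < (Real.sqrt c)⁻¹) hKle
            simpa using h
        _ = (Real.sqrt c)⁻¹ := by
            have hmul : Real.sqrt c * Real.sqrt c = c := Real.mul_self_sqrt hc.le
            field_simp
            rw [sq]; exact hmul
    calc _ ≤ (K:ℝ) + (Real.sqrt c)⁻¹ := add_le_add hpart1 hpart2
      _ ≤ ((Real.sqrt c)⁻¹ + (Real.sqrt c)⁻¹) + (Real.sqrt c)⁻¹ := by linarith
      _ ≤ 4 / Real.sqrt c := by rw [div_eq_mul_inv]; linarith [inv_nonneg.mpr hsc.le]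



lemma cs_bound (N : ℕ) (a E : ℕ → ℝ) (hE : ∀ k, 0 ≤ E k) :
    ∑ k ∈ Finset.range N, |a k| * E k
      ≤ Real.sqrt ((∑ k ∈ Finset.range N, (a k)^2) * (∑ k ∈ Finset.range N, (E k)^2)) := by
  have h := Finset.sum_mul_sq_le_sq_mul_sq (Finset.range N) (fun k => |a k|) E
  have h0 : 0 ≤ ∑ k ∈ Finset.range N, |a k| * E k :=
    Finset.sum_nonneg fun k _ => mul_nonneg (abs_nonneg _) (hE k)
  have h2 := Real.sqrt_le_sqrt h
  rw [Real.sqrt_sq h0] at h2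
  simpa [sq_abs] using h2

/-- Coefficient form of `‖P_N S(t)ψ‖_{L^p} ≤ C t^{-(p-2)/(4p)} ‖ψ‖_{L²}` for `p ≥ 2`. -/
theorem stmt9 (p : ℝ) (hp : 2 ≤ p) :
    ∃ C : ℝ, 0 < C ∧ ∀ (N : ℕ) (t : ℝ), 0 < t → ∀ a : ℕ → ℝ,
      (∫ x in (0:ℝ)..1,
        |∑ k ∈ Finset.range N,
          a (k+1) * Real.exp (-t * (((k:ℝ)+1)^2 * Real.pi^2)) *
            (Real.sqrt 2 * Real.sin (((k:ℝ)+1) * Real.pi * x))| ^ p) ^ (1/p)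
      ≤ C * t ^ (-(p-2)/(4*p)) *
        (∑ k ∈ Finset.range N, (a (k+1))^2) ^ ((1:ℝ)/2) := by
  refine ⟨3, by norm_num, ?_⟩
  intro N t ht a
  have hp0 : (0:ℝ) < p := by linarith
  have hp2 : (0:ℝ) ≤ p - 2 := by linarith
  -- notation
  set E : ℕ → ℝ := fun k => Real.exp (-t * (((k:ℝ)+1)^2 * Real.pi^2)) with hEdef
  set c : ℕ → ℝ := fun k => a (k+1) * E k with hcdef
  set f : ℝ → ℝ := fun x => ∑ k ∈ Finset.range N,
      c k * (Real.sqrt 2 * Real.sin (((k:ℝ)+1) * Real.pi * x)) with hfdef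
  set X : ℝ := ∑ k ∈ Finset.range N, (a (k+1))^2 with hXdef
  have hX0 : 0 ≤ X := Finset.sum_nonneg fun k _ => sq_nonneg _
  set A : ℝ := X ^ ((1:ℝ)/2) with hAdef
  have hA0 : 0 ≤ A := Real.rpow_nonneg hX0 _
  have hAsqrt : A = Real.sqrt X := (Real.sqrt_eq_rpow X).symm
  have hE0 : ∀ k, 0 < E k := fun k => Real.exp_pos _
  have hE1 : ∀ k, E k ≤ 1 := by
    intro k
    apply Real.exp_le_one_iff.mpr
    have : (0:ℝ) ≤ ((k:ℝ)+1)^2 * Real.pi^2 := by positivity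
    nlinarith
  set M : ℝ := 3 * t ^ (-(1/4) : ℝ) * A with hMdef
  have htq : (0:ℝ) < t ^ (-(1/4) : ℝ) := Real.rpow_pos_of_pos ht _
  have hM0 : 0 ≤ M := by positivity
  -- sup bound
  have hS : ∑ k ∈ Finset.range N, (E k)^2 ≤ 4 * t ^ (-(1/2) : ℝ) := by
    have hc2 : (0:ℝ) < 2 * Real.pi^2 * t := by positivity
    have h1 : ∀ k : ℕ, (E k)^2 = Real.exp (-(2 * Real.pi^2 * t * ((k:ℝ)+1)^2)) := by
      intro k
      simp only [hEdef]
      rw [sq, ← Real.exp_add]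
      congr 1
      ring
    calc ∑ k ∈ Finset.range N, (E k)^2
        = ∑ k ∈ Finset.range N, Real.exp (-(2 * Real.pi^2 * t * ((k:ℝ)+1)^2)) := by
          exact Finset.sum_congr rfl fun k _ => h1 k
      _ ≤ 4 / Real.sqrt (2 * Real.pi^2 * t) := gauss_sum N hc2
      _ ≤ 4 / Real.sqrt t := by
          apply div_le_div_of_nonneg_left (by norm_num) (Real.sqrt_pos.mpr ht)
          apply Real.sqrt_le_sqrt
          have h2pi : (1:ℝ) ≤ 2 * Real.pi^2 := by nlinarith [Real.pi_gt_three]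
          nlinarith [mul_le_mul_of_nonneg_left h2pi ht.le]
      _ = 4 * t ^ (-(1/2) : ℝ) := by
          rw [Real.sqrt_eq_rpow, div_eq_mul_inv, ← Real.rpow_neg ht.le]
  have hsup : ∀ x : ℝ, |f x| ≤ M := by
    intro x
    have step1 : |f x| ≤ Real.sqrt 2 * ∑ k ∈ Finset.range N, |a (k+1)| * E k := by
      calc |f x| ≤ ∑ k ∈ Finset.range N,
            |c k * (Real.sqrt 2 * Real.sin (((k:ℝ)+1) * Real.pi * x))| :=
            Finset.abs_sum_le_sum_abs _ _
        _ ≤ ∑ k ∈ Finset.range N, Real.sqrt 2 * (|a (k+1)| * E k) := by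
            apply Finset.sum_le_sum
            intro k _
            rw [abs_mul, abs_mul, abs_mul]
            rw [abs_of_pos (hE0 k), abs_of_nonneg (Real.sqrt_nonneg 2)]
            have hs1 : |Real.sin (((k:ℝ)+1) * Real.pi * x)| ≤ 1 := Real.abs_sin_le_one _
            have := mul_le_mul_of_nonneg_left hs1 (Real.sqrt_nonneg 2)
            calc |a (k+1)| * E k * (Real.sqrt 2 * |Real.sin (((k:ℝ)+1) * Real.pi * x)|)
                ≤ |a (k+1)| * E k * (Real.sqrt 2 * 1) := by
                  apply mul_le_mul_of_nonneg_left _ (by positivity)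
                  linarith
              _ = Real.sqrt 2 * (|a (k+1)| * E k) := by ring
        _ = Real.sqrt 2 * ∑ k ∈ Finset.range N, |a (k+1)| * E k := by
            rw [Finset.mul_sum]
    have step2 : ∑ k ∈ Finset.range N, |a (k+1)| * E k
        ≤ Real.sqrt (X * (4 * t ^ (-(1/2) : ℝ))) := by
      calc ∑ k ∈ Finset.range N, |a (k+1)| * E k
          ≤ Real.sqrt (X * ∑ k ∈ Finset.range N, (E k)^2) :=
            cs_bound N (fun k => a (k+1)) E (fun k => (hE0 k).le)
        _ ≤ Real.sqrt (X * (4 * t ^ (-(1/2) : ℝ))) := by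
            apply Real.sqrt_le_sqrt
            exact mul_le_mul_of_nonneg_left hS hX0
    calc |f x| ≤ Real.sqrt 2 * Real.sqrt (X * (4 * t ^ (-(1/2) : ℝ))) := by
          refine step1.trans ?_
          exact mul_le_mul_of_nonneg_left step2 (Real.sqrt_nonneg 2)
      _ = Real.sqrt (8 * (t ^ (-(1/2) : ℝ)) * X) := by
          rw [← Real.sqrt_mul (by norm_num : (0:ℝ) ≤ 2)]
          congr 1
          ring
      _ ≤ Real.sqrt (9 * (t ^ (-(1/2) : ℝ)) * X) := by
          apply Real.sqrt_le_sqrt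
          have h12 : (0:ℝ) ≤ t ^ (-(1/2) : ℝ) := (Real.rpow_pos_of_pos ht _).le
          nlinarith [mul_nonneg h12 hX0]
      _ = M := by
          rw [hMdef, hAsqrt]
          rw [show (9:ℝ) * (t ^ (-(1/2) : ℝ)) * X = 9 * ((t ^ (-(1/2) : ℝ)) * X) by ring]
          rw [Real.sqrt_mul (by norm_num : (0:ℝ) ≤ 9),
            Real.sqrt_mul (by positivity : (0:ℝ) ≤ t ^ (-(1/2) : ℝ))]
          have h9 : Real.sqrt 9 = 3 := by
            rw [show (9:ℝ) = 3^2 by norm_num, Real.sqrt_sq (by norm_num : (0:ℝ) ≤ 3)]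
          have hth : Real.sqrt (t ^ (-(1/2) : ℝ)) = t ^ (-(1/4) : ℝ) := by
            rw [Real.sqrt_eq_rpow, ← Real.rpow_mul ht.le]
            norm_num
          rw [h9, hth]
          ring
  -- pointwise bound
  have hpt : ∀ x : ℝ, |f x| ^ p ≤ M ^ (p-2) * (f x)^2 := by
    intro x
    rcases eq_or_lt_of_le (abs_nonneg (f x)) with h0 | h0
    · have hfx : f x = 0 := abs_eq_zero.mp h0.symm
      rw [hfx]
      simp [Real.zero_rpow hp0.ne']
    · have hsplit : |f x| ^ p = |f x| ^ (p-2) * |f x| ^ (2:ℝ) := by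
        rw [← Real.rpow_add h0]
        ring_nf
      rw [hsplit]
      have h2 : |f x| ^ (2:ℝ) = (f x)^2 := by
        rw [show (2:ℝ) = ((2:ℕ):ℝ) by norm_num, Real.rpow_natCast, sq_abs]
      rw [h2]
      apply mul_le_mul_of_nonneg_right _ (sq_nonneg _)
      exact Real.rpow_le_rpow (abs_nonneg _) (hsup x) hp2
  -- continuity and integrability
  have hfc : Continuous f := by
    rw [hfdef]
    apply continuous_finset_sum
    intro k _
    exact continuous_const.mul (continuous_const.mul
      (Real.continuous_sin.comp (continuous_const.mul continuous_id)))
  have hint1 : IntervalIntegrable (fun x => |f x| ^ p) volume 0 1 :=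
    ((hfc.abs).rpow_const (fun x => Or.inr hp0.le)).intervalIntegrable 0 1
  have hint2 : IntervalIntegrable (fun x => M ^ (p-2) * (f x)^2) volume 0 1 :=
    (continuous_const.mul (hfc.pow 2)).intervalIntegrable 0 1
  -- integral bound
  have hI : (∫ x in (0:ℝ)..1, |f x| ^ p) ≤ M ^ (p-2) * X := by
    calc (∫ x in (0:ℝ)..1, |f x| ^ p)
        ≤ ∫ x in (0:ℝ)..1, M ^ (p-2) * (f x)^2 :=
          intervalIntegral.integral_mono_on (by norm_num) hint1 hint2 (fun x _ => hpt x)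
      _ = M ^ (p-2) * ∫ x in (0:ℝ)..1, (f x)^2 := intervalIntegral.integral_const_mul _ _
      _ = M ^ (p-2) * ∑ k ∈ Finset.range N, (c k)^2 := by
          congr 1
          simp only [hfdef]
          exact l2sum N c
      _ ≤ M ^ (p-2) * X := by
          apply mul_le_mul_of_nonneg_left _ (Real.rpow_nonneg hM0 _)
          rw [hXdef]
          apply Finset.sum_le_sum
          intro k _
          simp only [hcdef]
          have hEk1 : (E k)^2 ≤ 1 := by nlinarith [hE1 k, (hE0 k).le]
          rw [mul_pow]
          nlinarith [sq_nonneg (a (k+1))]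
  -- rewrite goal integrand as f
  have hfeq : ∀ x : ℝ, (∑ k ∈ Finset.range N,
      a (k+1) * Real.exp (-t * (((k:ℝ)+1)^2 * Real.pi^2)) *
        (Real.sqrt 2 * Real.sin (((k:ℝ)+1) * Real.pi * x))) = f x := by
    intro x
    simp only [hfdef, hcdef, hEdef]
  have hgoal_eq : (∫ x in (0:ℝ)..1,
      |∑ k ∈ Finset.range N,
        a (k+1) * Real.exp (-t * (((k:ℝ)+1)^2 * Real.pi^2)) *
          (Real.sqrt 2 * Real.sin (((k:ℝ)+1) * Real.pi * x))| ^ p)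
      = ∫ x in (0:ℝ)..1, |f x| ^ p := by
    apply intervalIntegral.integral_congr
    intro x _
    simp only [hfeq]
  rw [hgoal_eq]
  -- final rpow computation
  have hXA : A ^ (2:ℝ) = X := by
    rw [hAdef, ← Real.rpow_mul hX0]
    norm_num
  have hInt0 : (0:ℝ) ≤ ∫ x in (0:ℝ)..1, |f x| ^ p :=
    intervalIntegral.integral_nonneg (by norm_num)
      (fun x _ => Real.rpow_nonneg (abs_nonneg _) p)
  have hsum1 : (p-2)*(1/p) + 2*(1/p) = 1 := by field_simp; ring
  have e1 : A ^ ((p-2)*(1/p)) * A ^ (2*(1/p)) = A := by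
    rw [← Real.rpow_add' hA0 (by rw [hsum1]; norm_num), hsum1, Real.rpow_one]
  have e2 : (-(1/4):ℝ)*((p-2)*(1/p)) = -(p-2)/(4*p) := by
    field_simp
  calc (∫ x in (0:ℝ)..1, |f x| ^ p) ^ (1/p)
      ≤ (M ^ (p-2) * X) ^ (1/p) :=
        Real.rpow_le_rpow hInt0 hI (by positivity)
    _ = 3 ^ ((p-2)*(1/p)) * t ^ (-(p-2)/(4*p)) * A := by
        rw [Real.mul_rpow (Real.rpow_nonneg hM0 _) hX0, ← Real.rpow_mul hM0,
          ← hXA, ← Real.rpow_mul hA0, hMdef,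
          Real.mul_rpow (by positivity) hA0,
          Real.mul_rpow (by norm_num) htq.le,
          ← Real.rpow_mul ht.le, e2, mul_assoc, e1]
    _ ≤ 3 * t ^ (-(p-2)/(4*p)) * A := by
        apply mul_le_mul_of_nonneg_right _ hA0
        apply mul_le_mul_of_nonneg_right _ (Real.rpow_pos_of_pos ht _).le
        calc (3:ℝ) ^ ((p-2)*(1/p)) ≤ 3 ^ (1:ℝ) := by
              apply Real.rpow_le_rpow_of_exponent_le (by norm_num)
              have h1p : (0:ℝ) < 1/p := by positivity
              nlinarith
          _ = 3 := Real.rpow_one 3
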